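/- Bounded-degree consequence for translates: if G is the intersection graph of finitely many translates of a fixed compact convex set in the plane with clique number ω(G) ≥ 2, then the maximum degree of G is at most 6ω(G) − 7, and hence the greedy (First-Fit-style) algorithm that introduces a new color only when forced uses at most 6ω(G) − 6 colors on-line. -/

import Mathlib

open Set Pointwise

/-- The intersection graph of the translates K + tr i of a fixed set K. -/
def translatesGraph {n : ℕ} (K : Set (ℝ × ℝ)) (tr : Fin n → ℝ × ℝ) :
    SimpleGraph (Fin n) :=
  SimpleGraph.fromRel
    (fun i j => (((fun p => p + tr i) '' K) ∩ ((fun p => p + tr j) '' K)).Nonempty)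

section Geom
variable {D : Set (ℝ × ℝ)}

lemma star_mem (hD : Convex ℝ D) (h0 : (0:ℝ×ℝ) ∈ D) {p : ℝ × ℝ} (hp : p ∈ D)
    {c : ℝ} (hc : 0 ≤ c) (hc1 : c ≤ 1) : c • p ∈ D := by
  have := hD h0 hp (by linarith : (0:ℝ) ≤ 1 - c) hc (by ring)
  simpa using this

lemma combo2_mem (hD : Convex ℝ D) (h0 : (0:ℝ×ℝ) ∈ D) {p q : ℝ × ℝ}
    (hp : p ∈ D) (hq : q ∈ D) {s t : ℝ} (hs : 0 ≤ s) (ht : 0 ≤ t) (hst : s + t ≤ 1) :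
    s • p + t • q ∈ D := by
  rcases eq_or_lt_of_le (add_nonneg hs ht) with h | h
  · have hs0 : s = 0 := by linarith
    have ht0 : t = 0 := by linarith
    simpa [hs0, ht0] using h0
  · have hmem : (s / (s+t)) • p + (t / (s+t)) • q ∈ D := by
      apply hD hp hq (by positivity) (by positivity)
      field_simp
    have := star_mem hD h0 hmem (le_of_lt h) hst
    rw [smul_add, smul_smul, smul_smul] at this
    rw [show (s+t) * (s/(s+t)) = s by field_simp, show (s+t) * (t/(s+t)) = t by field_simp] at this
    exact this

lemma mixed_mem (hD : Convex ℝ D) (h0 : (0:ℝ×ℝ) ∈ D) {u v : ℝ × ℝ}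
    (hu : u ∈ D) (huv : u - v ∈ D) (hnv : -v ∈ D)
    {s t : ℝ} (hs : 0 ≤ s) (hs1 : s ≤ 1) (ht : 0 ≤ t) (ht1 : t ≤ 1) :
    s • u - t • v ∈ D := by
  rcases le_total t s with h | h
  · have := combo2_mem hD h0 hu huv (by linarith : (0:ℝ) ≤ s - t) ht (by linarith)
    have e : (s - t) • u + t • (u - v) = s • u - t • v := by module
    rwa [e] at this
  · have := combo2_mem hD h0 huv hnv hs (by linarith : (0:ℝ) ≤ t - s) (by linarith)
    have e : s • (u - v) + (t - s) • (-v) = s • u - t • v := by module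
    rwa [e] at this

lemma coeff_le_one (hD : Convex ℝ D) (h0 : (0:ℝ×ℝ) ∈ D) {u v : ℝ × ℝ}
    (hgu : gauge D u = 1) (huv : u - v ∈ D) {a b : ℝ} (ha : 0 ≤ a) (hb : 0 ≤ b)
    (hx : a • u + b • v ∈ D) : a ≤ 1 := by
  by_contra hcon
  push_neg at hcon
  have hab : 0 < a + b := by linarith
  have hw : ((1/(1+b)) • (a • u + b • v) + (b/(1+b)) • (u - v)) ∈ D := by
    apply combo2_mem hD h0 hx huv (by positivity) (by positivity)
    rw [← add_div, div_le_one (by linarith)]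
  have key : u = ((1+b)/(a+b)) • ((1/(1+b)) • (a • u + b • v) + (b/(1+b)) • (u - v)) := by
    rw [smul_add, smul_smul, smul_smul]
    rw [show (1+b)/(a+b) * (1/(1+b)) = 1/(a+b) by field_simp,
        show (1+b)/(a+b) * (b/(1+b)) = b/(a+b) by field_simp]
    have : (1/(a+b)) • (a • u + b • v) + (b/(a+b)) • (u - v)
        = ((a+b)/(a+b)) • u := by module
    rw [this, div_self (ne_of_gt hab), one_smul]
  have hle : gauge D u ≤ (1+b)/(a+b) := by
    apply gauge_le_of_mem (by positivity)
    exact ⟨_, hw, key.symm⟩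
  rw [hgu] at hle
  rw [le_div_iff₀ (by linarith)] at hle
  linarith

lemma sector_sub_mem_aux (hD : Convex ℝ D) (hDc : IsClosed D) (h0 : (0:ℝ×ℝ) ∈ D)
    {u v : ℝ × ℝ} (hu : u ∈ D) (hv : v ∈ D) (huv : u - v ∈ D) (hvu : v - u ∈ D)
    (hnv : -v ∈ D) (hgu : gauge D u = 1) (hgv : gauge D v = 1)
    {a b c d : ℝ} (ha : 0 ≤ a) (hb : 0 ≤ b) (hc : 0 ≤ c) (hd : 0 ≤ d)
    (hx : a • u + b • v ∈ D) (hy : c • u + d • v ∈ D) (hac : c ≤ a) :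
    (a • u + b • v) - (c • u + d • v) ∈ D := by
  have ha1 : a ≤ 1 := coeff_le_one hD h0 hgu huv ha hb hx
  have hb1 : b ≤ 1 := coeff_le_one hD h0 hgv hvu hb ha (by rwa [add_comm] at hx)
  have hd1 : d ≤ 1 := coeff_le_one hD h0 hgv hvu hd hc (by rwa [add_comm] at hy)
  rcases le_total d b with hdb | hdb
  · by_contra hz
    obtain ⟨f, m, hfD, hm⟩ := geometric_hahn_banach_closed_point hD hDc hz
    have h0m : 0 < m := by simpa using hfD 0 h0
    have hfx : a * f u + b * f v < m := by simpa [map_add, map_smul] using hfD _ hx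
    have hfu : f u < m := hfD u hu
    have hfv : f v < m := hfD v hv
    have hmz : m < (a - c) * f u + (b - d) * f v := by
      have : f ((a • u + b • v) - (c • u + d • v)) = (a-c) * f u + (b-d) * f v := by
        simp [map_sub, map_add, map_smul]; ring
      linarith [hm.trans_eq this]
    rcases le_or_gt 0 (f u) with h1 | h1 <;> rcases le_or_gt 0 (f v) with h2 | h2
    · nlinarith [mul_nonneg hc h1, mul_nonneg hd h2]
    · nlinarith [mul_nonneg hc h1, mul_nonpos_of_nonneg_of_nonpos (by linarith : (0:ℝ) ≤ b - d) h2.le,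
        mul_le_of_le_one_left h1 (by linarith : a - c ≤ 1)]
    · nlinarith [mul_nonneg hd h2, mul_nonpos_of_nonneg_of_nonpos (by linarith : (0:ℝ) ≤ a - c) h1.le,
        mul_le_of_le_one_left h2 (by linarith : b - d ≤ 1)]
    · nlinarith [mul_nonpos_of_nonneg_of_nonpos (by linarith : (0:ℝ) ≤ a - c) h1.le,
        mul_nonpos_of_nonneg_of_nonpos (by linarith : (0:ℝ) ≤ b - d) h2.le]
  · have e : (a • u + b • v) - (c • u + d • v) = (a - c) • u - (d - b) • v := by module
    rw [e]
    exact mixed_mem hD h0 hu huv hnv (by linarith) (by linarith) (by linarith) (by linarith)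

lemma sector_sub_mem (hD : Convex ℝ D) (hDc : IsClosed D) (h0 : (0:ℝ×ℝ) ∈ D)
    (hsym : ∀ z ∈ D, -z ∈ D)
    {u v : ℝ × ℝ} (hu : u ∈ D) (hv : v ∈ D) (huv : u - v ∈ D) (hvu : v - u ∈ D)
    (hgu : gauge D u = 1) (hgv : gauge D v = 1)
    {a b c d : ℝ} (ha : 0 ≤ a) (hb : 0 ≤ b) (hc : 0 ≤ c) (hd : 0 ≤ d)
    (hx : a • u + b • v ∈ D) (hy : c • u + d • v ∈ D) :
    (a • u + b • v) - (c • u + d • v) ∈ D := by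
  have hnv : -v ∈ D := hsym v hv
  rcases le_total c a with h | h
  · exact sector_sub_mem_aux hD hDc h0 hu hv huv hvu hnv hgu hgv ha hb hc hd hx hy h
  · have := sector_sub_mem_aux hD hDc h0 hu hv huv hvu hnv hgu hgv hc hd ha hb hy hx h
    have := hsym _ this
    rwa [neg_sub] at this

lemma star_sub_mem (hD : Convex ℝ D) (hDc : IsClosed D) (h0 : (0:ℝ×ℝ) ∈ D)
    (hsym : ∀ z ∈ D, -z ∈ D) (hnhds : D ∈ nhds (0:ℝ×ℝ))
    {u v : ℝ × ℝ} (hu : u ∈ D) (hv : v ∈ D) (hvu : v - u ∈ D)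
    (hgu : gauge D u = 1) (hguv : gauge D (v - u) = 1)
    {r : ℝ} (hr0 : 0 < r) (hr1 : r ≤ 1) {a b : ℝ} (ha : 0 ≤ a) (hb : 0 ≤ b)
    (hgy : gauge D (a • (u - v) + b • u) ≤ r) :
    r • u - (a • (u - v) + b • u) ∈ D := by
  set y := a • (u - v) + b • u with hy
  have hguv' : gauge D (u - v) = 1 := by
    rw [show u - v = -(v-u) by ring, gauge_neg hsym, hguv]
  have hy' : r⁻¹ • y ∈ D := by
    rw [← hDc.closure_eq, ← gauge_le_one_iff_mem_closure hD hnhds,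
        gauge_smul_of_nonneg (by positivity)]
    rw [smul_eq_mul, inv_mul_le_one₀ hr0]
    exact hgy
  have hy'eq : r⁻¹ • y = (r⁻¹ * a) • (u - v) + (r⁻¹ * b) • u := by
    rw [hy]; module
  set a' := r⁻¹ * a with ha'def
  set b' := r⁻¹ * b with hb'def
  have ha' : 0 ≤ a' := by positivity
  have hb' : 0 ≤ b' := by positivity
  rw [hy'eq] at hy'
  have ha1 : a' ≤ 1 := by
    apply coeff_le_one hD h0 hguv' _ ha' hb' hy'
    · rw [show u - v - u = -v by ring]; exact hsym v hv
  have hb1 : b' ≤ 1 := by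
    apply coeff_le_one hD h0 hgu _ hb' ha' (by rwa [add_comm] at hy')
    · rw [show u - (u - v) = v by ring]; exact hv
  have huy : u - (a' • (u - v) + b' • u) ∈ D := by
    rcases le_or_gt (a' + b') 1 with h | h
    · have e : u - (a' • (u - v) + b' • u) = (1 - a' - b') • u + a' • v := by module
      rw [e]
      exact combo2_mem hD h0 hu hv (by linarith) ha' (by linarith)
    · have e : u - (a' • (u - v) + b' • u) = a' • v - (a' + b' - 1) • u := by module
      rw [e]
      exact mixed_mem hD h0 hv hvu (hsym u hu) ha' ha1 (by linarith) (by linarith)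
  have final : r • (u - (a' • (u - v) + b' • u)) = r • u - y := by
    have h1 : r * (r⁻¹ * a) = a := by field_simp
    have h2 : r * (r⁻¹ * b) = b := by field_simp
    rw [hy, ha'def, hb'def, smul_sub, smul_add, smul_smul, smul_smul, h1, h2]
  rw [← final]
  exact star_mem hD h0 huy hr0.le hr1

lemma exists_hexagon (hD : Convex ℝ D) (hDc : IsClosed D)
    (hsym : ∀ z ∈ D, -z ∈ D) (hnhds : D ∈ nhds (0:ℝ×ℝ))
    (hbdd : Bornology.IsBounded D) {u : ℝ × ℝ} (hgu : gauge D u = 1) :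
    ∃ v : ℝ × ℝ, gauge D v = 1 ∧ gauge D (v - u) = 1 ∧ u.1 * v.2 - u.2 * v.1 ≠ 0 := by
  have habs : Absorbent ℝ D := absorbent_nhds_zero hnhds
  have hvnb : Bornology.IsVonNBounded ℝ D := (NormedSpace.isVonNBounded_iff ℝ).mpr hbdd
  have hune : u ≠ 0 := by
    intro h; rw [h, gauge_zero] at hgu; norm_num at hgu
  set c : ℝ → ℝ × ℝ := fun θ => (Real.cos θ * u.1 - Real.sin θ * u.2,
      Real.sin θ * u.1 + Real.cos θ * u.2) with hc
  have hcont : Continuous c := by fun_prop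
  have hune' : u.1^2 + u.2^2 ≠ 0 := by
    intro h
    have h1 : u.1 = 0 := by nlinarith [sq_nonneg u.1, sq_nonneg u.2]
    have h2 : u.2 = 0 := by nlinarith [sq_nonneg u.1, sq_nonneg u.2]
    exact hune (Prod.ext_iff.mpr ⟨by simpa using h1, by simpa using h2⟩)
  have hcne : ∀ θ, c θ ≠ 0 := by
    intro θ hzero
    have h1 : Real.cos θ * u.1 - Real.sin θ * u.2 = 0 := by
      have := congrArg Prod.fst hzero; simpa [hc] using this
    have h2 : Real.sin θ * u.1 + Real.cos θ * u.2 = 0 := by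
      have := congrArg Prod.snd hzero; simpa [hc] using this
    apply hune'
    nlinarith [Real.sin_sq_add_cos_sq θ]
  have hgc : ∀ θ, 0 < gauge D (c θ) := fun θ => (gauge_pos habs hvnb).mpr (hcne θ)
  set w : ℝ → ℝ × ℝ := fun θ => (gauge D (c θ))⁻¹ • c θ with hw
  have hwcont : Continuous w := by
    show Continuous (fun θ => (gauge D (c θ))⁻¹ • c θ)
    apply Continuous.fun_smul
    · exact ((continuous_gauge hD hnhds).comp hcont).inv₀ (fun θ => (hgc θ).ne')
    · exact hcont
  have hgw : ∀ θ, gauge D (w θ) = 1 := by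
    intro θ
    rw [hw]
    simp only
    rw [gauge_smul_of_nonneg (inv_nonneg.mpr (gauge_nonneg _)), smul_eq_mul,
        inv_mul_cancel₀ (hgc θ).ne']
  set h : ℝ → ℝ := fun θ => gauge D (w θ - u) with hh
  have hhcont : Continuous h := (continuous_gauge hD hnhds).comp (hwcont.sub continuous_const)
  have hc0 : c 0 = u := by simp [hc]
  have hcpi : c Real.pi = -u := by simp [hc]; constructor <;> ring
  have h0 : h 0 = 0 := by
    simp only [hh, hw, hc0, hgu]
    norm_num
  have hpi : h Real.pi = 2 := by
    have : w Real.pi = -u := by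
      simp only [hw, hcpi, gauge_neg hsym, hgu]
      norm_num
    simp only [hh, this]
    rw [show -u - u = -((2:ℝ) • u) by module, gauge_neg hsym,
        gauge_smul_of_nonneg (by norm_num : (0:ℝ) ≤ 2), smul_eq_mul, hgu]
    norm_num
  obtain ⟨θ, hθmem, hθ⟩ : ∃ θ ∈ Icc 0 Real.pi, h θ = 1 := by
    have := intermediate_value_Icc (le_of_lt Real.pi_pos) hhcont.continuousOn
    have h1 : (1:ℝ) ∈ Icc (h 0) (h Real.pi) := by rw [h0, hpi]; norm_num
    obtain ⟨θ, hθ1, hθ2⟩ := this h1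
    exact ⟨θ, hθ1, hθ2⟩
  have hθ' : gauge D (w θ - u) = 1 := hθ
  refine ⟨w θ, hgw θ, hθ', ?_⟩
  intro hdet
  obtain ⟨l, hl⟩ : ∃ l : ℝ, w θ = l • u := by
    rcases eq_or_ne u.1 0 with h1 | h1
    · have h2 : u.2 ≠ 0 := by
        intro h2; exact hune (Prod.ext_iff.mpr ⟨by simpa using h1, by simpa using h2⟩)
      refine ⟨(w θ).2 / u.2, Prod.ext_iff.mpr ⟨?_, ?_⟩⟩
      · have hw1 : u.2 * (w θ).1 = 0 := by rw [h1] at hdet; linarith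
        have : (w θ).1 = 0 := by
          rcases mul_eq_zero.mp hw1 with h | h
          · exact absurd h h2
          · exact h
        simp [Prod.smul_fst, smul_eq_mul, h1, this]
      · simp [Prod.smul_snd, smul_eq_mul]
        field_simp
    · refine ⟨(w θ).1 / u.1, Prod.ext_iff.mpr ⟨?_, ?_⟩⟩
      · simp [Prod.smul_fst, smul_eq_mul]; field_simp
      · simp [Prod.smul_snd, smul_eq_mul]
        rw [div_mul_eq_mul_div, eq_div_iff h1]
        nlinarith [hdet]
  have habsl : |l| = 1 := by
    have : gauge D (w θ) = |l| := by
      rcases le_or_gt 0 l with h | h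
      · rw [hl, gauge_smul_of_nonneg h, smul_eq_mul, hgu, mul_one, abs_of_nonneg h]
      · rw [hl, show l • u = -((-l) • u) by module, gauge_neg hsym,
            gauge_smul_of_nonneg (by linarith : (0:ℝ) ≤ -l), smul_eq_mul, hgu, mul_one,
            abs_of_neg h]
    rw [hgw θ] at this
    exact this.symm
  rcases abs_eq (by norm_num : (0:ℝ) ≤ 1) |>.mp habsl with h | h
  · rw [h, one_smul] at hl
    rw [hl, sub_self, gauge_zero] at hθ'
    norm_num at hθ'
  · rw [h] at hl
    rw [hl, show (-1:ℝ) • u - u = -((2:ℝ) • u) by module, gauge_neg hsym,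
        gauge_smul_of_nonneg (by norm_num : (0:ℝ) ≤ 2), smul_eq_mul, hgu] at hθ'
    norm_num at hθ'

end Geom

section Graph

lemma inter_translates_iff (K : Set (ℝ×ℝ)) (a b : ℝ×ℝ) :
    (((fun p => p + a) '' K) ∩ ((fun p => p + b) '' K)).Nonempty ↔ b - a ∈ K - K := by
  constructor
  · rintro ⟨z, ⟨p, hp, hpz⟩, ⟨q, hq, hqz⟩⟩
    have hpq : p + a = q + b := hpz.trans hqz.symm
    have : p - q = b - a := sub_eq_sub_iff_add_eq_add.mpr (by rw [hpq, add_comm q b])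
    rw [← this]
    exact Set.sub_mem_sub hp hq
  · intro hmem
    rw [Set.mem_sub] at hmem
    obtain ⟨p, hp, q, hq, hpq⟩ := hmem
    refine ⟨p + a, ⟨p, hp, rfl⟩, ⟨q, hq, ?_⟩⟩
    have : p + a = b + q := sub_eq_sub_iff_add_eq_add.mp hpq
    rw [this, add_comm]

lemma subKK_symm {K : Set (ℝ×ℝ)} {z : ℝ×ℝ} (hz : z ∈ K - K) : -z ∈ K - K := by
  rw [Set.mem_sub] at hz ⊢
  obtain ⟨p, hp, q, hq, hpq⟩ := hz
  exact ⟨q, hq, p, hp, by rw [← hpq]; ring⟩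

lemma adj_iff {n : ℕ} (K : Set (ℝ×ℝ)) (tr : Fin n → ℝ×ℝ) (i j : Fin n) :
    (translatesGraph K tr).Adj i j ↔ i ≠ j ∧ tr j - tr i ∈ K - K := by
  rw [translatesGraph, SimpleGraph.fromRel_adj]
  constructor
  · rintro ⟨hne, h | h⟩
    · exact ⟨hne, (inter_translates_iff K _ _).mp h⟩
    · have := (inter_translates_iff K _ _).mp h
      have := subKK_symm this
      rw [neg_sub] at this
      exact ⟨hne, this⟩
  · rintro ⟨hne, h⟩
    exact ⟨hne, Or.inl ((inter_translates_iff K _ _).mpr h)⟩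

end Graph

theorem deg_bound {n ω : ℕ} (K : Set (ℝ × ℝ)) (hK : IsCompact K) (hKc : Convex ℝ K)
    (hKne : K.Nonempty) (tr : Fin n → ℝ × ℝ) (hω : 2 ≤ ω)
    (hcl : ∀ s : Finset (Fin n),
      ((s : Set (Fin n)).Pairwise (translatesGraph K tr).Adj) → s.card ≤ ω)
    (i : Fin n) : {j | (translatesGraph K tr).Adj i j}.ncard ≤ 6 * ω - 7 := by
  classical
  set G := translatesGraph K tr with hG
  set D := K - K with hDdef
  have hDconv : Convex ℝ D := hKc.sub hKc
  have hDcomp : IsCompact D := by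
    have he : D = (fun p : (ℝ×ℝ)×(ℝ×ℝ) => p.1 - p.2) '' (K ×ˢ K) := by
      ext z
      constructor
      · intro hz
        obtain ⟨p, hp, q, hq, h⟩ := Set.mem_sub.mp hz
        exact ⟨(p,q), Set.mk_mem_prod hp hq, h⟩
      · rintro ⟨⟨p,q⟩, hpq, h⟩
        exact Set.mem_sub.mpr ⟨p, hpq.1, q, hpq.2, h⟩
    rw [he]
    exact (hK.prod hK).image (continuous_fst.sub continuous_snd)
  have hDclosed : IsClosed D := hDcomp.isClosed
  have hDbdd : Bornology.IsBounded D := hDcomp.isBounded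
  have hsym : ∀ z ∈ D, -z ∈ D := fun z hz => subKK_symm hz
  have h0 : (0:ℝ×ℝ) ∈ D := by
    obtain ⟨p, hp⟩ := hKne
    rw [hDdef, show (0:ℝ×ℝ) = p - p by ring]
    exact Set.sub_mem_sub hp hp
  set x : Fin n → ℝ×ℝ := fun j => tr j - tr i with hx
  have hGadj : ∀ a b : Fin n, G.Adj a b ↔ a ≠ b ∧ tr b - tr a ∈ D := fun a b => adj_iff K tr a b
  have hadj2 : ∀ a b : Fin n, a ≠ b → x b - x a ∈ D → G.Adj a b := by
    intro a b hne hm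
    rw [hGadj]
    refine ⟨hne, ?_⟩
    have e : tr b - tr a = x b - x a := by rw [hx]; ring
    rw [e]; exact hm
  set N : Finset (Fin n) := Finset.univ.filter (fun j => G.Adj i j) with hN
  have hncard : {j | G.Adj i j}.ncard = N.card := by
    rw [show {j | G.Adj i j} = (N : Set (Fin n)) by ext j; simp [hN]]
    exact Set.ncard_coe_finset _
  have hiN : i ∉ N := by simp [hN]
  have hmemN : ∀ j ∈ N, G.Adj i j := by
    intro j hj
    rw [hN] at hj
    exact (Finset.mem_filter.mp hj).2
  have hNmem : ∀ j, G.Adj i j → j ∈ N := by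
    intro j hj
    rw [hN]
    exact Finset.mem_filter.mpr ⟨Finset.mem_univ j, hj⟩
  have hxD : ∀ j ∈ N, x j ∈ D := fun j hj => ((hGadj i j).mp (hmemN j hj)).2
  rw [hncard]
  by_cases hall : ∀ j ∈ N, x j = 0
  · have hpair : ((insert i N : Finset (Fin n)) : Set (Fin n)).Pairwise G.Adj := by
      intro p hp q hq hpq
      simp only [Finset.coe_insert, Set.mem_insert_iff, Finset.mem_coe] at hp hq
      rcases hp with rfl | hp
      · rcases hq with rfl | hq
        · exact absurd rfl hpq
        · exact hmemN q hq
      · rcases hq with rfl | hq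
        · exact (hmemN p hp).symm
        · exact hadj2 p q hpq (by rw [hall p hp, hall q hq, sub_zero]; exact h0)
    have := hcl _ hpair
    rw [Finset.card_insert_of_notMem hiN] at this
    omega
  · push_neg at hall
    obtain ⟨j₀, hj₀N, hj₀⟩ := hall
    by_cases hint : (interior D).Nonempty
    · -- main (full-dimensional) case
      have hadjsub : ∀ p q : Fin n, p ≠ q → x p - x q ∈ D → G.Adj p q := fun p q hne h =>
        (hadj2 q p hne.symm h).symm
      obtain ⟨z0, hz0⟩ := hint
      have hDneg : -D = D := by
        ext w
        constructor
        · intro hw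
          rw [Set.mem_neg] at hw
          have := hsym _ hw
          rwa [neg_neg] at this
        · intro hw
          rw [Set.mem_neg]
          exact hsym _ hw
      have hz0' : -z0 ∈ interior D := by
        have hsub : -interior D ⊆ D := by
          intro w hw
          have h1 : -w ∈ D := interior_subset (Set.mem_neg.mp hw)
          have h2 := hsym _ h1
          rwa [neg_neg] at h2
        have hopen : IsOpen (-interior D) := isOpen_interior.neg
        exact hopen.subset_interior_iff.mpr hsub (Set.neg_mem_neg.mpr hz0)
      have h0int : (0:ℝ×ℝ) ∈ interior D := by
        have := hDconv.interior hz0 hz0' (by norm_num : (0:ℝ) ≤ 1/2)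
          (by norm_num : (0:ℝ) ≤ 1/2) (by norm_num)
        rwa [show (1/2:ℝ) • z0 + (1/2:ℝ) • (-z0) = 0 by module] at this
      have hnhds : D ∈ nhds (0:ℝ×ℝ) := mem_interior_iff_mem_nhds.mp h0int
      have habs : Absorbent ℝ D := absorbent_nhds_zero hnhds
      have hvnb : Bornology.IsVonNBounded ℝ D := (NormedSpace.isVonNBounded_iff ℝ).mpr hDbdd
      obtain ⟨js, hjs, hmax⟩ := Finset.exists_max_image (N.filter (fun j => x j ≠ 0))
        (fun j => gauge D (x j)) ⟨j₀, Finset.mem_filter.mpr ⟨hj₀N, hj₀⟩⟩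
      have hjsN : js ∈ N := (Finset.mem_filter.mp hjs).1
      have hjsne : x js ≠ 0 := (Finset.mem_filter.mp hjs).2
      set r := gauge D (x js) with hr
      have hr0 : 0 < r := (gauge_pos habs hvnb).mpr hjsne
      have hr1 : r ≤ 1 := gauge_le_one_of_mem (hxD js hjsN)
      set u := r⁻¹ • x js with hu_def
      have hgu : gauge D u = 1 := by
        rw [hu_def, gauge_smul_of_nonneg (inv_nonneg.mpr hr0.le), smul_eq_mul, ← hr,
          inv_mul_cancel₀ hr0.ne']
      obtain ⟨v, hgv, hguv, hdet⟩ := exists_hexagon hDconv hDclosed hsym hnhds hDbdd hgu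
      have hmemD : ∀ z : ℝ×ℝ, gauge D z = 1 → z ∈ D := by
        intro z hz
        rw [← hDclosed.closure_eq, ← gauge_le_one_iff_mem_closure hDconv hnhds]
        exact le_of_eq hz
      have hu : u ∈ D := hmemD u hgu
      have hv : v ∈ D := hmemD v hgv
      have hvu : v - u ∈ D := hmemD _ hguv
      have huv : u - v ∈ D := by
        have := hsym _ hvu; rwa [neg_sub] at this
      have hguv' : gauge D (u - v) = 1 := by
        rw [show u - v = -(v - u) by ring, gauge_neg hsym, hguv]
      have hgnu : gauge D (-u) = 1 := by rw [gauge_neg hsym, hgu]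
      have hgnv : gauge D (-v) = 1 := by rw [gauge_neg hsym, hgv]
      have hnu : -u ∈ D := hsym u hu
      have hnv : -v ∈ D := hsym v hv
      set A : ℝ×ℝ → ℝ := fun z => (z.1*v.2 - z.2*v.1)/(u.1*v.2 - u.2*v.1) with hA
      set B : ℝ×ℝ → ℝ := fun z => (u.1*z.2 - u.2*z.1)/(u.1*v.2 - u.2*v.1) with hB
      have hrepr : ∀ z : ℝ×ℝ, z = (A z) • u + (B z) • v := by
        intro z
        apply Prod.ext_iff.mpr
        constructor
        · show z.1 = ((A z) • u + (B z) • v).1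
          simp only [Prod.fst_add, Prod.smul_fst, smul_eq_mul, hA, hB]
          rw [div_mul_eq_mul_div, div_mul_eq_mul_div, ← add_div, eq_div_iff hdet]
          ring
        · show z.2 = ((A z) • u + (B z) • v).2
          simp only [Prod.snd_add, Prod.smul_snd, smul_eq_mul, hA, hB]
          rw [div_mul_eq_mul_div, div_mul_eq_mul_div, ← add_div, eq_div_iff hdet]
          ring
      have e2 : ∀ z : ℝ×ℝ, (A z + B z) • v + (-(A z)) • (v - u) = (A z) • u + (B z) • v := by
        intro z; module
      have e3 : ∀ z : ℝ×ℝ, (B z) • (v - u) + (-(A z + B z)) • (-u) = (A z) • u + (B z) • v := by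
        intro z; module
      have e4 : ∀ z : ℝ×ℝ, (-(A z)) • (-u) + (-(B z)) • (-v) = (A z) • u + (B z) • v := by
        intro z; module
      have e5 : ∀ z : ℝ×ℝ, (-(A z + B z)) • (-v) + (A z) • (u - v) = (A z) • u + (B z) • v := by
        intro z; module
      have e6 : ∀ z : ℝ×ℝ, (-(B z)) • (u - v) + (A z + B z) • u = (A z) • u + (B z) • v := by
        intro z; module
      set cls : Fin n → Fin 7 := fun j =>
        if x j = 0 then 0
        else if 0 < A (x j) ∧ 0 ≤ B (x j) then 1
        else if A (x j) ≤ 0 ∧ 0 < A (x j) + B (x j) then 2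
        else if 0 < B (x j) ∧ A (x j) + B (x j) ≤ 0 then 3
        else if A (x j) < 0 ∧ B (x j) ≤ 0 then 4
        else if 0 ≤ A (x j) ∧ A (x j) + B (x j) < 0 then 5
        else 6 with hcls
      have hcase : ∀ j, x j ≠ 0 →
          (cls j = 1 ∧ 0 < A (x j) ∧ 0 ≤ B (x j)) ∨
          (cls j = 2 ∧ A (x j) ≤ 0 ∧ 0 < A (x j) + B (x j)) ∨
          (cls j = 3 ∧ 0 < B (x j) ∧ A (x j) + B (x j) ≤ 0) ∨
          (cls j = 4 ∧ A (x j) < 0 ∧ B (x j) ≤ 0) ∨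
          (cls j = 5 ∧ 0 ≤ A (x j) ∧ A (x j) + B (x j) < 0) ∨
          (cls j = 6 ∧ B (x j) < 0 ∧ 0 ≤ A (x j) + B (x j)) := by
        intro j hne
        have hAB : ¬(A (x j) = 0 ∧ B (x j) = 0) := by
          rintro ⟨hA0, hB0⟩
          apply hne
          have h := hrepr (x j)
          rw [hA0, hB0] at h
          simpa using h
        simp only [hcls, if_neg hne]
        split_ifs with h1 h2 h3 h4 h5
        · exact Or.inl ⟨rfl, h1⟩
        · exact Or.inr (Or.inl ⟨rfl, h2⟩)
        · exact Or.inr (Or.inr (Or.inl ⟨rfl, h3⟩))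
        · exact Or.inr (Or.inr (Or.inr (Or.inl ⟨rfl, h4⟩)))
        · exact Or.inr (Or.inr (Or.inr (Or.inr (Or.inl ⟨rfl, h5⟩))))
        · refine Or.inr (Or.inr (Or.inr (Or.inr (Or.inr ⟨rfl, ?_⟩))))
          have hBneg : B (x j) < 0 := by
            by_contra hb
            push_neg at hb
            have hA0 : A (x j) ≤ 0 := by
              by_contra ha; push_neg at ha; exact h1 ⟨ha, hb⟩
            have hAB0 : A (x j) + B (x j) ≤ 0 := by
              by_contra hs; push_neg at hs; exact h2 ⟨hA0, hs⟩
            have hB0 : B (x j) ≤ 0 := by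
              by_contra hb2; push_neg at hb2; exact h3 ⟨hb2, hAB0⟩
            have hA0' : 0 ≤ A (x j) := by
              by_contra ha; push_neg at ha; exact h4 ⟨ha, hB0⟩
            exact hAB ⟨le_antisymm hA0 hA0', le_antisymm hB0 hb⟩
          have hABpos : 0 ≤ A (x j) + B (x j) := by
            by_contra hs
            push_neg at hs
            have hA0' : 0 ≤ A (x j) := by
              by_contra ha; push_neg at ha; exact h4 ⟨ha, hBneg.le⟩
            exact h5 ⟨hA0', hs⟩
          exact ⟨hBneg, hABpos⟩
      have hcls0' : ∀ j, cls j = 0 → x j = 0 := by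
        intro j h
        by_contra hne
        rcases hcase j hne with ⟨e,_⟩|⟨e,_⟩|⟨e,_⟩|⟨e,_⟩|⟨e,_⟩|⟨e,_⟩ <;>
          rw [e] at h <;> exact absurd h (by decide)
      have hDmem : ∀ j ∈ N, (A (x j)) • u + (B (x j)) • v ∈ D := by
        intro j hj
        rw [← hrepr (x j)]
        exact hxD j hj
      have hwithin : ∀ j ∈ N, ∀ j' ∈ N, x j ≠ 0 → x j' ≠ 0 → cls j = cls j' →
          x j - x j' ∈ D := by
        intro j hj j' hj' hzj hzj' hcc
        rcases hcase j hzj with ⟨e,hP⟩|⟨e,hP⟩|⟨e,hP⟩|⟨e,hP⟩|⟨e,hP⟩|⟨e,hP⟩ <;>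
          rcases hcase j' hzj' with ⟨e',hQ⟩|⟨e',hQ⟩|⟨e',hQ⟩|⟨e',hQ⟩|⟨e',hQ⟩|⟨e',hQ⟩ <;>
          rw [e, e'] at hcc <;>
          first
          | exact absurd hcc (by decide)
          | skip
        · have h := sector_sub_mem hDconv hDclosed h0 hsym hu hv huv hvu hgu hgv
            hP.1.le hP.2 hQ.1.le hQ.2 (hDmem j hj) (hDmem j' hj')
          rw [← hrepr (x j), ← hrepr (x j')] at h
          exact h
        · have hm1 : (A (x j) + B (x j)) • v + (-(A (x j))) • (v - u) ∈ D := by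
            rw [e2]; exact hDmem j hj
          have hm2 : (A (x j') + B (x j')) • v + (-(A (x j'))) • (v - u) ∈ D := by
            rw [e2]; exact hDmem j' hj'
          have h := sector_sub_mem hDconv hDclosed h0 hsym hv hvu
            (by rw [show v - (v - u) = u by ring]; exact hu)
            (by rw [show (v - u) - v = -u by ring]; exact hnu)
            hgv hguv hP.2.le (neg_nonneg.mpr hP.1) hQ.2.le (neg_nonneg.mpr hQ.1) hm1 hm2
          rw [e2, e2, ← hrepr (x j), ← hrepr (x j')] at h
          exact h
        · have hm1 : (B (x j)) • (v - u) + (-(A (x j) + B (x j))) • (-u) ∈ D := by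
            rw [e3]; exact hDmem j hj
          have hm2 : (B (x j')) • (v - u) + (-(A (x j') + B (x j'))) • (-u) ∈ D := by
            rw [e3]; exact hDmem j' hj'
          have h := sector_sub_mem hDconv hDclosed h0 hsym hvu hnu
            (by rw [show (v - u) - -u = v by ring]; exact hv)
            (by rw [show -u - (v - u) = -v by ring]; exact hnv)
            hguv hgnu hP.1.le (neg_nonneg.mpr hP.2) hQ.1.le (neg_nonneg.mpr hQ.2) hm1 hm2
          rw [e3, e3, ← hrepr (x j), ← hrepr (x j')] at h
          exact h
        · have hm1 : (-(A (x j))) • (-u) + (-(B (x j))) • (-v) ∈ D := by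
            rw [e4]; exact hDmem j hj
          have hm2 : (-(A (x j'))) • (-u) + (-(B (x j'))) • (-v) ∈ D := by
            rw [e4]; exact hDmem j' hj'
          have h := sector_sub_mem hDconv hDclosed h0 hsym hnu hnv
            (by rw [show -u - -v = -(u - v) + (0:ℝ×ℝ) by ring]; rw [add_zero]; exact hsym _ huv)
            (by rw [show -v - -u = u - v by ring]; exact huv)
            hgnu hgnv (neg_nonneg.mpr hP.1.le) (neg_nonneg.mpr hP.2)
            (neg_nonneg.mpr hQ.1.le) (neg_nonneg.mpr hQ.2) hm1 hm2
          rw [e4, e4, ← hrepr (x j), ← hrepr (x j')] at h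
          exact h
        · have hm1 : (-(A (x j) + B (x j))) • (-v) + (A (x j)) • (u - v) ∈ D := by
            rw [e5]; exact hDmem j hj
          have hm2 : (-(A (x j') + B (x j'))) • (-v) + (A (x j')) • (u - v) ∈ D := by
            rw [e5]; exact hDmem j' hj'
          have h := sector_sub_mem hDconv hDclosed h0 hsym hnv huv
            (by rw [show -v - (u - v) = -u by ring]; exact hnu)
            (by rw [show (u - v) - -v = u by ring]; exact hu)
            hgnv hguv' (neg_nonneg.mpr hP.2.le) hP.1 (neg_nonneg.mpr hQ.2.le) hQ.1 hm1 hm2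
          rw [e5, e5, ← hrepr (x j), ← hrepr (x j')] at h
          exact h
        · have hm1 : (-(B (x j))) • (u - v) + (A (x j) + B (x j)) • u ∈ D := by
            rw [e6]; exact hDmem j hj
          have hm2 : (-(B (x j'))) • (u - v) + (A (x j') + B (x j')) • u ∈ D := by
            rw [e6]; exact hDmem j' hj'
          have h := sector_sub_mem hDconv hDclosed h0 hsym huv hu
            (by rw [show (u - v) - u = -v by ring]; exact hnv)
            (by rw [show u - (u - v) = v by ring]; exact hv)
            hguv' hgu (neg_nonneg.mpr hP.1.le) hP.2 (neg_nonneg.mpr hQ.1.le) hQ.2 hm1 hm2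
          rw [e6, e6, ← hrepr (x j), ← hrepr (x j')] at h
          exact h
      have hxjs : r • u = x js := by rw [hu_def, smul_inv_smul₀ hr0.ne']
      have hAjs : A (x js) = r := by
        rw [← hxjs]
        simp only [hA, Prod.smul_fst, Prod.smul_snd, smul_eq_mul]
        rw [div_eq_iff hdet]
        ring
      have hBjs : B (x js) = 0 := by
        rw [← hxjs]
        simp only [hB, Prod.smul_fst, Prod.smul_snd, smul_eq_mul]
        rw [div_eq_iff hdet]
        ring
      have hclsjs : cls js = 1 := by
        simp only [hcls, if_neg hjsne]
        rw [if_pos ⟨(by rw [hAjs]; exact hr0 : (0:ℝ) < A (x js)),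
          (by simp [hBjs] : (0:ℝ) ≤ B (x js))⟩]
      have hstar : ∀ j ∈ N, cls j = 6 → G.Adj j js := by
        intro j hj h6
        have hzj : x j ≠ 0 := by
          intro h
          have h00 : cls j = 0 := by simp only [hcls, if_pos h]
          rw [h00] at h6
          exact absurd h6 (by decide)
        have hP : B (x j) < 0 ∧ 0 ≤ A (x j) + B (x j) := by
          rcases hcase j hzj with ⟨e,hP⟩|⟨e,hP⟩|⟨e,hP⟩|⟨e,hP⟩|⟨e,hP⟩|⟨e,hP⟩ <;> rw [e] at h6 <;>
            first
            | exact absurd h6 (by decide)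
            | exact hP
        have hgyr : gauge D ((-(B (x j))) • (u - v) + (A (x j) + B (x j)) • u) ≤ r := by
          rw [e6 (x j), ← hrepr (x j)]
          exact hmax j (Finset.mem_filter.mpr ⟨hj, hzj⟩)
        have hst := star_sub_mem hDconv hDclosed h0 hsym hnhds hu hv hvu hgu hguv hr0 hr1
          (neg_nonneg.mpr hP.1.le) hP.2 hgyr
        rw [e6 (x j), ← hrepr (x j), hxjs] at hst
        have hne : j ≠ js := by
          intro h
          rw [h, hclsjs] at h6
          exact absurd h6 (by decide)
        exact hadj2 j js hne hst
      have hsame : ∀ p ∈ N, ∀ q ∈ N, p ≠ q → cls p = cls q → G.Adj p q := by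
        intro p hp q hq hne hcc
        by_cases hzp : x p = 0
        · by_cases hzq : x q = 0
          · exact hadjsub p q hne (by rw [hzp, hzq, sub_zero]; exact h0)
          · exact absurd (hcls0' q (by rw [← hcc]; simp only [hcls, if_pos hzp])) hzq
        · by_cases hzq : x q = 0
          · exact absurd (hcls0' p (by rw [hcc]; simp only [hcls, if_pos hzq])) hzp
          · exact hadjsub p q hne (hwithin p hp q hq hzp hzq hcc)
      have hcross0 : ∀ p ∈ N, ∀ q ∈ N, p ≠ q → cls p = 0 → G.Adj p q := by
        intro p hp q hq hne h
        exact hadjsub p q hne (by rw [hcls0' p h, zero_sub]; exact hsym _ (hxD q hq))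
      have hclq : ∀ k : Fin 7, k ≠ 0 →
          (N.filter (fun j => cls j = 0)).card + (N.filter (fun j => cls j = k)).card + 1 ≤ ω := by
        intro k hk
        have hnotmem : i ∉ (N.filter (fun j => cls j = 0)) ∪ (N.filter (fun j => cls j = k)) := by
          simp only [Finset.mem_union, Finset.mem_filter]
          rintro (⟨h,_⟩|⟨h,_⟩) <;> exact hiN h
        have hdisj : Disjoint (N.filter (fun j => cls j = 0)) (N.filter (fun j => cls j = k)) := by
          rw [Finset.disjoint_left]
          intro a ha hb
          exact hk (((Finset.mem_filter.mp hb).2).symm.trans (Finset.mem_filter.mp ha).2)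
        have hpair : ((insert i ((N.filter (fun j => cls j = 0)) ∪
            (N.filter (fun j => cls j = k))) : Finset (Fin n)) : Set (Fin n)).Pairwise G.Adj := by
          intro p hp q hq hpq
          simp only [Finset.coe_insert, Set.mem_insert_iff, Finset.coe_union,
            Set.mem_union, Finset.mem_coe, Finset.mem_filter] at hp hq
          rcases hp with rfl | hp
          · rcases hq with rfl | hq
            · exact absurd rfl hpq
            · rcases hq with ⟨hqN, _⟩ | ⟨hqN, _⟩ <;> exact hmemN q hqN
          · rcases hq with rfl | hq
            · rcases hp with ⟨hpN, _⟩ | ⟨hpN, _⟩ <;> exact (hmemN p hpN).symm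
            · rcases hp with ⟨hpN, hp0⟩ | ⟨hpN, hpk⟩ <;> rcases hq with ⟨hqN, hq0⟩ | ⟨hqN, hqk⟩
              · exact hsame p hpN q hqN hpq (by rw [hp0, hq0])
              · exact hcross0 p hpN q hqN hpq hp0
              · exact (hcross0 q hqN p hpN hpq.symm hq0).symm
              · exact hsame p hpN q hqN hpq (by rw [hpk, hqk])
        have hS' := hcl _ hpair
        rw [Finset.card_insert_of_notMem hnotmem, Finset.card_union_of_disjoint hdisj] at hS'
        omega
      have hclq6 : (N.filter (fun j => cls j = 0)).card +
          (N.filter (fun j => cls j = 6)).card + 2 ≤ ω := by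
        have hnotmem : i ∉ (N.filter (fun j => cls j = 0)) ∪ (N.filter (fun j => cls j = 6)) := by
          simp only [Finset.mem_union, Finset.mem_filter]
          rintro (⟨h,_⟩|⟨h,_⟩) <;> exact hiN h
        have hdisj : Disjoint (N.filter (fun j => cls j = 0)) (N.filter (fun j => cls j = 6)) := by
          rw [Finset.disjoint_left]
          intro a ha hb
          have h1 := (Finset.mem_filter.mp ha).2
          have h2 := (Finset.mem_filter.mp hb).2
          rw [h1] at h2
          exact absurd h2 (by decide)
        have hjsnot : js ∉ insert i ((N.filter (fun j => cls j = 0)) ∪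
            (N.filter (fun j => cls j = 6))) := by
          simp only [Finset.mem_insert, Finset.mem_union, Finset.mem_filter]
          rintro (rfl | ⟨_, h⟩ | ⟨_, h⟩)
          · exact hiN hjsN
          · rw [hclsjs] at h; exact absurd h (by decide)
          · rw [hclsjs] at h; exact absurd h (by decide)
        have hpair : ((insert js (insert i ((N.filter (fun j => cls j = 0)) ∪
            (N.filter (fun j => cls j = 6)))) : Finset (Fin n)) : Set (Fin n)).Pairwise G.Adj := by
          intro p hp q hq hpq
          simp only [Finset.coe_insert, Set.mem_insert_iff, Finset.coe_union,
            Set.mem_union, Finset.mem_coe, Finset.mem_filter] at hp hq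
          rcases hp with rfl | hp
          · rcases hq with rfl | hq
            · exact absurd rfl hpq
            · rcases hq with rfl | hq
              · exact (hmemN p hjsN).symm
              · rcases hq with ⟨hqN, hq0⟩ | ⟨hqN, hq6⟩
                · exact (hcross0 q hqN p hjsN (Ne.symm hpq) hq0).symm
                · exact (hstar q hqN hq6).symm
          · rcases hq with rfl | hq
            · rcases hp with rfl | hp
              · exact hmemN q hjsN
              · rcases hp with ⟨hpN, hp0⟩ | ⟨hpN, hp6⟩
                · exact hcross0 p hpN q hjsN hpq hp0
                · exact hstar p hpN hp6
            · rcases hp with rfl | hp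
              · rcases hq with rfl | hq
                · exact absurd rfl hpq
                · rcases hq with ⟨hqN, _⟩ | ⟨hqN, _⟩ <;> exact hmemN q hqN
              · rcases hq with rfl | hq
                · rcases hp with ⟨hpN, _⟩ | ⟨hpN, _⟩ <;> exact (hmemN p hpN).symm
                · rcases hp with ⟨hpN, hp0⟩ | ⟨hpN, hp6⟩ <;>
                    rcases hq with ⟨hqN, hq0⟩ | ⟨hqN, hq6⟩
                  · exact hsame p hpN q hqN hpq (by rw [hp0, hq0])
                  · exact hcross0 p hpN q hqN hpq hp0
                  · exact (hcross0 q hqN p hpN hpq.symm hq0).symm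
                  · exact hsame p hpN q hqN hpq (by rw [hp6, hq6])
        have hS' := hcl _ hpair
        rw [Finset.card_insert_of_notMem hjsnot, Finset.card_insert_of_notMem hnotmem,
          Finset.card_union_of_disjoint hdisj] at hS'
        omega
      have hsum : N.card = ∑ k : Fin 7, (N.filter (fun j => cls j = k)).card :=
        Finset.card_eq_sum_card_fiberwise (fun j _ => Finset.mem_univ (cls j))
      rw [Fin.sum_univ_seven] at hsum
      have hb1 := hclq 1 (by decide)
      have hb2 := hclq 2 (by decide)
      have hb3 := hclq 3 (by decide)
      have hb4 := hclq 4 (by decide)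
      have hb5 := hclq 5 (by decide)
      omega
    · -- degenerate case : D lies on a line
      have hpar : ∀ z ∈ D, ∀ w ∈ D, z.1 * w.2 - z.2 * w.1 = 0 := by
        intro z hz w hw
        by_contra hdet
        apply hint
        set Δ := z.1 * w.2 - z.2 * w.1 with hΔ
        set U : Set (ℝ×ℝ) := {p | |(p.1*w.2 - p.2*w.1)/Δ| + |(z.1*p.2 - z.2*p.1)/Δ| < 1} with hU
        have hUopen : IsOpen U := by
          have hcont : Continuous fun p : ℝ×ℝ =>
              |(p.1*w.2 - p.2*w.1)/Δ| + |(z.1*p.2 - z.2*p.1)/Δ| := by fun_prop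
          exact isOpen_lt hcont continuous_const
        have h0U : (0:ℝ×ℝ) ∈ U := by simp [hU]
        have hUD : U ⊆ D := by
          intro p hp
          rw [hU, Set.mem_setOf_eq] at hp
          set α := (p.1*w.2 - p.2*w.1)/Δ with hα
          set β := (z.1*p.2 - z.2*p.1)/Δ with hβ
          have hrepr : p = α • z + β • w := by
            apply Prod.ext_iff.mpr
            constructor
            · show p.1 = (α • z + β • w).1
              simp only [Prod.fst_add, Prod.smul_fst, smul_eq_mul, hα, hβ, hΔ]
              rw [div_mul_eq_mul_div, div_mul_eq_mul_div, ← add_div,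
                eq_div_iff (show z.1 * w.2 - z.2 * w.1 ≠ 0 from hdet)]
              ring
            · show p.2 = (α • z + β • w).2
              simp only [Prod.snd_add, Prod.smul_snd, smul_eq_mul, hα, hβ, hΔ]
              rw [div_mul_eq_mul_div, div_mul_eq_mul_div, ← add_div,
                eq_div_iff (show z.1 * w.2 - z.2 * w.1 ≠ 0 from hdet)]
              ring
          have hmem : |α| • (if 0 ≤ α then z else -z) + |β| • (if 0 ≤ β then w else -w) ∈ D := by
            apply combo2_mem hDconv h0 ?_ ?_ (abs_nonneg α) (abs_nonneg β) hp.le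
            · split_ifs; exacts [hz, hsym z hz]
            · split_ifs; exacts [hw, hsym w hw]
          have hpe : p = |α| • (if 0 ≤ α then z else -z) + |β| • (if 0 ≤ β then w else -w) := by
            rcases le_or_gt 0 α with h1 | h1 <;> rcases le_or_gt 0 β with h2 | h2
            · rw [if_pos h1, if_pos h2, abs_of_nonneg h1, abs_of_nonneg h2]; exact hrepr
            · rw [if_pos h1, if_neg (not_le.mpr h2), abs_of_nonneg h1, abs_of_neg h2, hrepr]
              module
            · rw [if_neg (not_le.mpr h1), if_pos h2, abs_of_neg h1, abs_of_nonneg h2, hrepr]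
              module
            · rw [if_neg (not_le.mpr h1), if_neg (not_le.mpr h2), abs_of_neg h1, abs_of_neg h2,
                hrepr]
              module
          rw [hpe]
          exact hmem
        exact ⟨0, mem_interior.mpr ⟨U, hUD, hUopen, h0U⟩⟩
      set d := x j₀ with hd
      have hdD : d ∈ D := hxD j₀ hj₀N
      have hd2 : d.1^2 + d.2^2 ≠ 0 := by
        intro h
        apply hj₀
        have h1 : d.1 = 0 := by nlinarith [sq_nonneg d.1, sq_nonneg d.2]
        have h2 : d.2 = 0 := by nlinarith [sq_nonneg d.1, sq_nonneg d.2]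
        exact Prod.ext_iff.mpr ⟨by simpa using h1, by simpa using h2⟩
      set l : Fin n → ℝ := fun j => ((x j).1*d.1 + (x j).2*d.2)/(d.1^2+d.2^2) with hl
      have hld : ∀ j ∈ N, x j = l j • d := by
        intro j hj
        have hp := hpar (x j) (hxD j hj) d hdD
        apply Prod.ext_iff.mpr
        constructor
        · show (x j).1 = (l j • d).1
          simp only [Prod.smul_fst, smul_eq_mul, hl]
          field_simp
          linear_combination d.2 * hp
        · show (x j).2 = (l j • d).2
          simp only [Prod.smul_snd, smul_eq_mul, hl]
          field_simp
          linear_combination (-d.1) * hp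
      set cls : Fin n → Fin 3 := fun j => if x j = 0 then 0 else if 0 < l j then 1 else 2
        with hcls
      have hcls0' : ∀ j, cls j = 0 → x j = 0 := by
        intro j h
        by_contra hne
        simp only [hcls, if_neg hne] at h
        split_ifs at h <;> exact absurd h (by decide)
      have hlne : ∀ j ∈ N, x j ≠ 0 → l j ≠ 0 := by
        intro j hj hne h
        exact hne (by rw [hld j hj, h, zero_smul])
      have key : ∀ p q : Fin n, p ∈ N → q ∈ N → x p ≠ 0 → 0 ≤ l q / l p → l q / l p ≤ 1 →
          x p - x q ∈ D := by
        intro p q hp hq hzp hr0 hr1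
        have hlp : l p ≠ 0 := hlne p hp hzp
        have hc : x p - x q = (1 - l q / l p) • x p := by
          rw [hld p hp, hld q hq, smul_smul,
            show (1 - l q / l p) * l p = l p - l q by field_simp]
          module
        rw [hc]
        exact star_mem hDconv h0 (hxD p hp) (by linarith) (by linarith)
      have hwithin : ∀ j ∈ N, ∀ j' ∈ N, cls j = cls j' → x j - x j' ∈ D := by
        intro j hj j' hj' hcc
        by_cases hz : x j = 0
        · have hc0 : cls j = 0 := by simp only [hcls, if_pos hz]
          have hz' : x j' = 0 := hcls0' j' (by rw [← hcc, hc0])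
          rw [hz, hz', sub_zero]
          exact h0
        · have hz' : x j' ≠ 0 := by
            intro hz'
            have hq0 : cls j' = 0 := by simp only [hcls, if_pos hz']
            rw [hq0] at hcc
            simp only [hcls, if_neg hz] at hcc
            split_ifs at hcc <;> exact absurd hcc (by decide)
          have hlj : l j ≠ 0 := hlne j hj hz
          have hlj' : l j' ≠ 0 := hlne j' hj' hz'
          have hsame : (0 < l j ∧ 0 < l j') ∨ (l j < 0 ∧ l j' < 0) := by
            by_cases h1 : 0 < l j <;> by_cases h2 : 0 < l j'
            · exact Or.inl ⟨h1, h2⟩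
            · exfalso
              simp only [hcls, if_neg hz, if_neg hz', if_pos h1, if_neg h2] at hcc
              exact absurd hcc (by decide)
            · exfalso
              simp only [hcls, if_neg hz, if_neg hz', if_neg h1, if_pos h2] at hcc
              exact absurd hcc (by decide)
            · exact Or.inr ⟨lt_of_le_of_ne (not_lt.mp h1) hlj, lt_of_le_of_ne (not_lt.mp h2) hlj'⟩
          rcases hsame with ⟨h1, h2⟩ | ⟨h1, h2⟩
          · rcases le_total (l j') (l j) with hle | hle
            · exact key j j' hj hj' hz (div_nonneg h2.le h1.le) ((div_le_one h1).mpr hle)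
            · have := key j' j hj' hj hz' (div_nonneg h1.le h2.le) ((div_le_one h2).mpr hle)
              have := hsym _ this
              rwa [neg_sub] at this
          · rcases le_total (l j) (l j') with hle | hle
            · have hr : l j' / l j = (- l j') / (- l j) := by rw [neg_div_neg_eq]
              exact key j j' hj hj' hz
                (by rw [hr]; exact div_nonneg (by linarith) (by linarith))
                (by rw [hr]; exact (div_le_one (by linarith)).mpr (by linarith))
            · have hr : l j / l j' = (- l j) / (- l j') := by rw [neg_div_neg_eq]
              have := key j' j hj' hj hz'
                (by rw [hr]; exact div_nonneg (by linarith) (by linarith))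
                (by rw [hr]; exact (div_le_one (by linarith)).mpr (by linarith))
              have := hsym _ this
              rwa [neg_sub] at this
      have hadjsub : ∀ p q : Fin n, p ≠ q → x p - x q ∈ D → G.Adj p q := by
        intro p q hne h
        exact (hadj2 q p hne.symm h).symm
      have hclq : ∀ k : Fin 3, k ≠ 0 →
          (N.filter (fun j => cls j = 0)).card + (N.filter (fun j => cls j = k)).card + 1 ≤ ω := by
        intro k hk
        have hnotmem : i ∉ (N.filter (fun j => cls j = 0)) ∪ (N.filter (fun j => cls j = k)) := by
          simp only [Finset.mem_union, Finset.mem_filter]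
          rintro (⟨h,_⟩|⟨h,_⟩) <;> exact hiN h
        have hdisj : Disjoint (N.filter (fun j => cls j = 0)) (N.filter (fun j => cls j = k)) := by
          rw [Finset.disjoint_left]
          intro a ha hb
          exact hk (((Finset.mem_filter.mp hb).2).symm.trans (Finset.mem_filter.mp ha).2)
        have hpair : ((insert i ((N.filter (fun j => cls j = 0)) ∪
            (N.filter (fun j => cls j = k))) : Finset (Fin n)) : Set (Fin n)).Pairwise G.Adj := by
          intro p hp q hq hpq
          simp only [Finset.coe_insert, Set.mem_insert_iff, Finset.coe_union,
            Set.mem_union, Finset.mem_coe, Finset.mem_filter] at hp hq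
          rcases hp with rfl | hp
          · rcases hq with rfl | hq
            · exact absurd rfl hpq
            · rcases hq with ⟨hqN, _⟩ | ⟨hqN, _⟩ <;> exact hmemN q hqN
          · rcases hq with rfl | hq
            · rcases hp with ⟨hpN, _⟩ | ⟨hpN, _⟩ <;> exact (hmemN p hpN).symm
            · rcases hp with ⟨hpN, hp0⟩ | ⟨hpN, hpk⟩ <;> rcases hq with ⟨hqN, hq0⟩ | ⟨hqN, hqk⟩
              · exact hadjsub p q hpq (hwithin p hpN q hqN (by rw [hp0, hq0]))
              · exact hadjsub p q hpq
                  (by rw [hcls0' p hp0, zero_sub]; exact hsym _ (hxD q hqN))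
              · exact hadjsub p q hpq (by rw [hcls0' q hq0, sub_zero]; exact hxD p hpN)
              · exact hadjsub p q hpq (hwithin p hpN q hqN (by rw [hpk, hqk]))
        have hS' := hcl _ hpair
        rw [Finset.card_insert_of_notMem hnotmem, Finset.card_union_of_disjoint hdisj] at hS'
        omega
      have hsum : N.card = ∑ k : Fin 3, (N.filter (fun j => cls j = k)).card :=
        Finset.card_eq_sum_card_fiberwise (fun j _ => Finset.mem_univ (cls j))
      rw [Fin.sum_univ_three] at hsum
      have hb1 := hclq 1 (by decide)
      have hb2 := hclq 2 (by decide)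
      omega

/-- If G is the intersection graph of finitely many translates of a fixed
compact convex set in the plane with clique number ω ≥ 2, then every vertex has degree
at most 6ω − 7, and hence any greedy on-line coloring (which gives a vertex a color
already forced by earlier neighbors whenever possible, i.e. introduces a new color only
when it has to) uses at most 6ω − 6 colors, in any presentation order. -/
theorem stmt16 {n ω : ℕ} (K : Set (ℝ × ℝ)) (hK : IsCompact K) (hKc : Convex ℝ K)
    (tr : Fin n → ℝ × ℝ) (hω : 2 ≤ ω)
    (hclique : IsGreatest
      {m : ℕ | ∃ s : Finset (Fin n), (translatesGraph K tr).IsNClique m s} ω) :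
    (∀ i : Fin n, {j | (translatesGraph K tr).Adj i j}.ncard ≤ 6 * ω - 7) ∧
    (∀ col : Fin n → ℕ,
      (∀ i j : Fin n, j < i → (translatesGraph K tr).Adj i j → col j ≠ col i) →
      (∀ i : Fin n, ∀ m < col i, ∃ j, j < i ∧ (translatesGraph K tr).Adj i j ∧
        col j = m) →
      ∀ i : Fin n, col i < 6 * ω - 6) := by
  set G := translatesGraph K tr with hG
  have hKne : K.Nonempty := by
    obtain ⟨s, hs⟩ := hclique.1
    have hcard : 1 < s.card := by rw [hs.2]; omega
    obtain ⟨a, ha, b, hb, hab⟩ := Finset.one_lt_card.mp hcard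
    have hadj := hs.1 ha hb hab
    rw [hG, adj_iff] at hadj
    obtain ⟨p, hp, -⟩ := Set.mem_sub.mp hadj.2
    exact ⟨p, hp⟩
  have hcl : ∀ s : Finset (Fin n), ((s : Set (Fin n)).Pairwise G.Adj) → s.card ≤ ω :=
    fun s hs => hclique.2 ⟨s, hs, rfl⟩
  have hdeg := deg_bound K hK hKc hKne tr hω hcl
  refine ⟨hdeg, ?_⟩
  intro col hproper hgreedy i
  have hcol : col i ≤ {j | G.Adj i j}.ncard := by
    classical
    set N : Finset (Fin n) := Finset.univ.filter (fun j => G.Adj i j) with hN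
    have hncard : {j | G.Adj i j}.ncard = N.card := by
      rw [show {j | G.Adj i j} = (N : Set (Fin n)) by ext j; simp [hN]]
      exact Set.ncard_coe_finset _
    rw [hncard]
    have hwit : ∀ m ∈ Finset.range (col i), ∃ j, j < i ∧ G.Adj i j ∧ col j = m := by
      intro m hm
      exact hgreedy i m (Finset.mem_range.mp hm)
    choose F hF1 hF2 hF3 using hwit
    have hmaps : ∀ m (hm : m ∈ Finset.range (col i)), F m hm ∈ N := by
      intro m hm
      simp [hN, hF2 m hm]
    calc col i = (Finset.range (col i)).card := by rw [Finset.card_range]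
    _ ≤ N.card := by
        apply Finset.card_le_card_of_injOn (fun m => if hm : m ∈ Finset.range (col i)
            then F m hm else i) ?_ ?_
        · intro m hm; simp only [Finset.mem_coe] at hm ⊢; simp only [dif_pos hm]; exact hmaps m hm
        · intro m1 hm1 m2 hm2 he
          simp only [Finset.mem_coe] at hm1 hm2
          simp only [dif_pos hm1, dif_pos hm2] at he
          rw [← hF3 m1 hm1, ← hF3 m2 hm2, he]
  have h2 := hdeg i
  rw [← hG] at h2
  omega
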